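/- (Single-use Sibson value for the quantum erasure channel with maximally entangled input.) Let d ≥ 1 be a natural number, p ∈ [0,1] and λ > 1 real. Let A = Fin d, B = Fin (d+1), let φ ∈ ℂ^{A×B} be the unit vector with φ(a,b) = 1/√d if b is the image of a under the canonical embedding Fin d ↪ Fin (d+1) and 0 otherwise, and let e ∈ B be the last element. Define the density matrix ρ := (1−p)·|φ⟩⟨φ| + (p/d)·(1_A ⊗ |e⟩⟨e|) indexed by A×B. Then Tr[ (Tr_A(ρ^{λ}))^{1/λ} ] = (1−p)·d^{(λ−1)/λ} + p·d^{(1−λ)/λ}. Equivalently, with s := 1/λ − 1, the value −ln Tr[ (Tr_A(ρ^{1/(s+1)}))^{s+1} ] equals E₀(s) := −ln( (1−p)·d^{−s} + p·d^{s} ). -/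

import Mathlib

open scoped Kronecker
open Matrix
open scoped ComplexOrder

/-- Apply a real function to a Hermitian matrix via the functional calculus
(spectral decomposition); returns 0 for non-Hermitian input. -/
noncomputable def matFun {n : Type*} [Fintype n] [DecidableEq n]
    (M : Matrix n n ℂ) (f : ℝ → ℝ) : Matrix n n ℂ :=
  if h : M.IsHermitian then
    (h.eigenvectorUnitary : Matrix n n ℂ) *
      Matrix.diagonal (fun i => (f (h.eigenvalues i) : ℂ)) *
      (star (h.eigenvectorUnitary : Matrix n n ℂ))
  else 0

/-- Real power of a (Hermitian positive semidefinite) matrix, with the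
convention `0 ^ t = 0` for every real `t`. -/
noncomputable def mpow {n : Type*} [Fintype n] [DecidableEq n]
    (M : Matrix n n ℂ) (t : ℝ) : Matrix n n ℂ :=
  matFun M (fun x => if x = 0 then 0 else x ^ t)

/-- Real part of the trace. -/
noncomputable def trR {n : Type*} [Fintype n] (M : Matrix n n ℂ) : ℝ :=
  (Matrix.trace M).re

/-- Partial trace over the first tensor factor. -/
noncomputable def ptrA {A B : Type*} [Fintype A]
    (M : Matrix (A × B) (A × B) ℂ) : Matrix B B ℂ :=
  Matrix.of fun b b' => ∑ a : A, M (a, b) (a, b')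

/-- Quantum Rényi divergence of order `lam`. -/
noncomputable def renyiD {n : Type*} [Fintype n] [DecidableEq n]
    (lam : ℝ) (X Y : Matrix n n ℂ) : ℝ :=
  (1 / (lam - 1)) * Real.log (trR (mpow X lam * mpow Y (1 - lam)))

/-- The quantity `K_lam(A⟩B)_ρ`: infimum over positive definite density
matrices `σ` on `B` of `D_lam(ρ ‖ 1_A ⊗ σ)`. -/
noncomputable def Kinf {A B : Type*} [Fintype A] [Fintype B]
    [DecidableEq A] [DecidableEq B]
    (lam : ℝ) (ρ : Matrix (A × B) (A × B) ℂ) : ℝ :=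
  ⨅ σ : {σ : Matrix B B ℂ // σ.PosDef ∧ σ.trace = 1},
    renyiD lam ρ ((1 : Matrix A A ℂ) ⊗ₖ (σ : Matrix B B ℂ))

/-- The CPTP map determined by a finite family of Kraus operators. -/
noncomputable def krausMap {ι n m : Type*} [Fintype ι] [Fintype n] [Fintype m]
    (K : ι → Matrix m n ℂ) (X : Matrix n n ℂ) : Matrix m m ℂ :=
  ∑ j, K j * X * (K j)ᴴ

/-- Trace of the positive part of a Hermitian matrix. -/
noncomputable def trPos {n : Type*} [Fintype n] [DecidableEq n]
    (X : Matrix n n ℂ) : ℝ :=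
  if h : X.IsHermitian then ∑ i, max (h.eigenvalues i) 0 else 0

/-- Binary Rényi quantity `𝔻_lam(α‖β)`. -/
noncomputable def binD (lam α β : ℝ) : ℝ :=
  (1 / (lam - 1)) *
    Real.log (α ^ lam * β ^ (1 - lam) + (1 - α) ^ lam * (β⁻¹ - β) ^ (1 - lam))

section AuxLemmas

open Polynomial

variable {n : Type*} [Fintype n] [DecidableEq n]

lemma aeval_diagonal' (v : n → ℂ) (q : ℂ[X]) :
    aeval (Matrix.diagonal v) q = Matrix.diagonal (fun i => q.eval (v i)) := by
  induction q using Polynomial.induction_on' with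
  | add p q hp hq => simp [hp, hq, ← Matrix.diagonal_add]
  | monomial k a =>
      simp [aeval_monomial, Matrix.diagonal_pow, algebraMap_eq_diagonal,
        Matrix.diagonal_mul_diagonal, eval_monomial]

lemma uconj_pow (U D : Matrix n n ℂ) (hU : star U * U = 1) (k : ℕ) (hk : k ≠ 0) :
    (U * D * star U) ^ k = U * D ^ k * star U := by
  induction k with
  | zero => simp at hk
  | succ k ih =>
      rcases Nat.eq_zero_or_pos k with hk0 | hk0
      · subst hk0; simp [pow_one]
      · rw [pow_succ, ih hk0.ne', pow_succ]
        calc U * D ^ k * star U * (U * D * star U)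
            = U * D ^ k * (star U * U) * (D * star U) := by
              simp only [Matrix.mul_assoc]
          _ = U * (D ^ k * D) * star U := by rw [hU]; simp only [Matrix.mul_assoc, Matrix.mul_one]
          _ = _ := rfl

lemma aeval_uconj (U D : Matrix n n ℂ) (hU : star U * U = 1) (hU' : U * star U = 1) (q : ℂ[X]) :
    aeval (U * D * star U) q = U * aeval D q * star U := by
  induction q using Polynomial.induction_on' with
  | add p q hp hq => simp [hp, hq, Matrix.mul_add, Matrix.add_mul]
  | monomial k a =>
      rcases Nat.eq_zero_or_pos k with hk0 | hk0
      · subst hk0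
        simp only [monomial_zero_left, aeval_C]
        rw [algebraMap_eq_diagonal]
        simp [Pi.algebraMap_def, ← Matrix.smul_one_eq_diagonal, Matrix.smul_mul,
          Matrix.mul_smul, hU']
      · simp only [aeval_monomial, uconj_pow U D hU k hk0.ne']
        rw [show algebraMap ℂ (Matrix n n ℂ) a = a • (1 : Matrix n n ℂ) from
          Algebra.algebraMap_eq_smul_one a]
        rw [Matrix.smul_mul, Matrix.one_mul, Matrix.smul_mul, Matrix.one_mul,
          Matrix.mul_smul, Matrix.smul_mul]

lemma matFun_eq_aeval (M : Matrix n n ℂ) (hM : M.IsHermitian) (f : ℝ → ℝ) (q : ℂ[X])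
    (hq : ∀ i, q.eval ((hM.eigenvalues i : ℝ) : ℂ) = ((f (hM.eigenvalues i) : ℝ) : ℂ)) :
    (if h : M.IsHermitian then
      (h.eigenvectorUnitary : Matrix n n ℂ) *
        Matrix.diagonal (fun i => (f (h.eigenvalues i) : ℂ)) *
        (star (h.eigenvectorUnitary : Matrix n n ℂ))
    else 0) = aeval M q := by
  rw [dif_pos hM]
  have hU : star (hM.eigenvectorUnitary : Matrix n n ℂ) * (hM.eigenvectorUnitary : Matrix n n ℂ) = 1 :=
    Unitary.star_mul_self_of_mem (hM.eigenvectorUnitary).2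
  have hU' : (hM.eigenvectorUnitary : Matrix n n ℂ) * star (hM.eigenvectorUnitary : Matrix n n ℂ) = 1 :=
    Unitary.mul_star_self_of_mem (hM.eigenvectorUnitary).2
  conv_rhs => rw [hM.spectral_theorem, Unitary.conjStarAlgAut_apply]
  rw [aeval_uconj _ _ hU hU', aeval_diagonal']
  have : (fun i => ((f (hM.eigenvalues i) : ℝ) : ℂ)) =
      fun i => q.eval (((RCLike.ofReal ∘ hM.eigenvalues) i : ℂ)) := by
    funext i; exact (hq i).symm
  rw [this]

lemma eig_root_of_annihilate (M : Matrix n n ℂ) (hM : M.IsHermitian) (q : ℂ[X])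
    (hq : aeval M q = 0) (i : n) : q.eval ((hM.eigenvalues i : ℝ) : ℂ) = 0 := by
  have hU : star (hM.eigenvectorUnitary : Matrix n n ℂ) * (hM.eigenvectorUnitary : Matrix n n ℂ) = 1 :=
    Unitary.star_mul_self_of_mem (hM.eigenvectorUnitary).2
  have hU' : (hM.eigenvectorUnitary : Matrix n n ℂ) * star (hM.eigenvectorUnitary : Matrix n n ℂ) = 1 :=
    Unitary.mul_star_self_of_mem (hM.eigenvectorUnitary).2
  rw [hM.spectral_theorem, Unitary.conjStarAlgAut_apply, aeval_uconj _ _ hU hU', aeval_diagonal'] at hq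
  set U : Matrix n n ℂ := (hM.eigenvectorUnitary : Matrix n n ℂ) with hUdef
  set D : Matrix n n ℂ := Matrix.diagonal (fun i => q.eval (((RCLike.ofReal ∘ hM.eigenvalues) i : ℂ))) with hDdef
  have h2 : D = 0 := by
    calc D = (star U * U) * D * (star U * U) := by rw [hU]; simp
    _ = star U * (U * D * star U) * U := by simp only [Matrix.mul_assoc]
    _ = star U * 0 * U := by rw [hq]
    _ = 0 := by simp
  have h3 := congrFun (congrFun (h2.symm.trans rfl).symm i) i
  rw [hDdef] at h3
  simpa using h3


lemma hermSmulReal {P : Matrix n n ℂ} (h : P.IsHermitian) (c : ℝ) :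
    (((c : ℝ) : ℂ) • P).IsHermitian := by
  have := Matrix.conjTranspose_smul (((c : ℝ) : ℂ)) P
  unfold Matrix.IsHermitian
  rw [Matrix.conjTranspose_smul, h, Complex.star_def, Complex.conj_ofReal]

lemma matFun_two_proj (P₁ P₂ : Matrix n n ℂ) (h₁ : P₁.IsHermitian) (h₂ : P₂.IsHermitian)
    (hP₁ : P₁ * P₁ = P₁) (hP₂ : P₂ * P₂ = P₂) (h₁₂ : P₁ * P₂ = 0) (h₂₁ : P₂ * P₁ = 0)
    (c₁ c₂ : ℝ) (f : ℝ → ℝ) (hf0 : f 0 = 0) :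
    matFun (((c₁ : ℝ) : ℂ) • P₁ + ((c₂ : ℝ) : ℂ) • P₂) f =
      ((f c₁ : ℝ) : ℂ) • P₁ + ((f c₂ : ℝ) : ℂ) • P₂ := by
  set M : Matrix n n ℂ := ((c₁ : ℝ) : ℂ) • P₁ + ((c₂ : ℝ) : ℂ) • P₂ with hMdef
  have hM : M.IsHermitian := by
    rw [hMdef]
    exact ((hermSmulReal h₁ c₁).add (hermSmulReal h₂ c₂))
  have hMul : ∀ a b a' b' : ℂ,
      ((a • P₁ + b • P₂) * (a' • P₁ + b' • P₂) : Matrix n n ℂ) =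
        (a * a') • P₁ + (b * b') • P₂ := by
    intro a b a' b'
    simp only [Matrix.add_mul, Matrix.mul_add, Matrix.smul_mul, Matrix.mul_smul,
      hP₁, hP₂, h₁₂, h₂₁, smul_smul, smul_zero, add_zero, zero_add]
    rw [mul_comm a' a, mul_comm b' b]
  have hpow : ∀ k : ℕ, M ^ (k + 1) =
      ((c₁ : ℂ) ^ (k + 1)) • P₁ + ((c₂ : ℂ) ^ (k + 1)) • P₂ := by
    intro k
    induction k with
    | zero => simp [hMdef]
    | succ k ih =>
        rw [pow_succ, ih, hMdef, hMul, ← pow_succ, ← pow_succ]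
  -- the interpolating polynomial
  set S : Finset ℝ := {0, c₁, c₂} with hSdef
  have hinj : Set.InjOn (fun x : ℝ => (x : ℂ)) S :=
    Complex.ofReal_injective.injOn
  set q : ℂ[X] := Lagrange.interpolate S (fun x : ℝ => (x : ℂ))
    (fun x : ℝ => ((f x : ℝ) : ℂ)) with hqdef
  have heval : ∀ x ∈ S, q.eval ((x : ℝ) : ℂ) = ((f x : ℝ) : ℂ) := by
    intro x hx
    exact Lagrange.eval_interpolate_at_node _ hinj hx
  have h0S : (0 : ℝ) ∈ S := by simp [hSdef]
  have hc₁S : c₁ ∈ S := by simp [hSdef]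
  have hc₂S : c₂ ∈ S := by simp [hSdef]
  -- the annihilating polynomial
  set r₀ : ℂ[X] := X * (X - C (c₁ : ℂ)) * (X - C (c₂ : ℂ)) with hr₀def
  have hann : aeval M r₀ = 0 := by
    rw [hr₀def]
    simp only [_root_.map_mul, map_sub, aeval_X, aeval_C, Algebra.algebraMap_eq_smul_one]
    have e1 : M * (M - ((c₁ : ℂ)) • 1) = ((c₂ : ℂ) * c₂ - c₁ * c₂) • P₂ := by
      rw [Matrix.mul_sub, Matrix.mul_smul, Matrix.mul_one]
      rw [hMdef, hMul]
      rw [smul_add, smul_smul, smul_smul, sub_smul]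
      abel
    rw [e1, Matrix.smul_mul, Matrix.mul_sub, Matrix.mul_smul, Matrix.mul_one]
    have e2 : P₂ * M = (c₂ : ℂ) • P₂ := by
      rw [hMdef, Matrix.mul_add, Matrix.mul_smul, Matrix.mul_smul, h₂₁, hP₂, smul_zero, zero_add]
    rw [e2, sub_self, smul_zero]
  -- eigenvalues lie in {0, c₁, c₂}
  have heig : ∀ i, hM.eigenvalues i ∈ S := by
    intro i
    have := eig_root_of_annihilate M hM r₀ hann i
    rw [hr₀def] at this
    simp only [eval_mul, eval_sub, eval_X, eval_C, mul_eq_zero, sub_eq_zero] at this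
    rcases this with (h | h) | h
    · have hz : hM.eigenvalues i = 0 := by exact_mod_cast h
      rw [hz]; exact h0S
    · have hz : hM.eigenvalues i = c₁ := by exact_mod_cast h
      rw [hz]; exact hc₁S
    · have hz : hM.eigenvalues i = c₂ := by exact_mod_cast h
      rw [hz]; exact hc₂S
  have hq : ∀ i, q.eval ((hM.eigenvalues i : ℝ) : ℂ) = ((f (hM.eigenvalues i) : ℝ) : ℂ) :=
    fun i => heval _ (heig i)
  have hmf : matFun M f = aeval M q := by
    rw [matFun]
    exact matFun_eq_aeval M hM f q hq
  rw [hmf]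
  -- now compute aeval M q
  have hcoeff0 : q.coeff 0 = 0 := by
    rw [Polynomial.coeff_zero_eq_eval_zero]
    have := heval 0 h0S
    simpa [hf0] using this
  set N := q.natDegree with hN
  have hsum : aeval M q = ∑ k ∈ Finset.range (N + 1), q.coeff k • M ^ k :=
    Polynomial.aeval_eq_sum_range M
  rw [hsum, Finset.sum_range_succ']
  simp only [pow_zero, hcoeff0, zero_smul, add_zero, hpow]
  have hc : ∀ c : ℂ, (∑ k ∈ Finset.range N, q.coeff (k + 1) * c ^ (k + 1)) =
      q.eval c - q.coeff 0 := by
    intro c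
    have := Polynomial.eval_eq_sum_range (p := q) c
    rw [Finset.sum_range_succ'] at this
    rw [this, pow_zero, mul_one]
    ring
  calc (∑ k ∈ Finset.range N,
        q.coeff (k + 1) • (((c₁:ℂ) ^ (k + 1)) • P₁ + ((c₂:ℂ) ^ (k + 1)) • P₂))
      = (∑ k ∈ Finset.range N, q.coeff (k + 1) * (c₁:ℂ) ^ (k + 1)) • P₁ +
        (∑ k ∈ Finset.range N, q.coeff (k + 1) * (c₂:ℂ) ^ (k + 1)) • P₂ := by
        simp only [smul_add, smul_smul]
        rw [Finset.sum_add_distrib, Finset.sum_smul, Finset.sum_smul]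
    _ = ((f c₁ : ℝ) : ℂ) • P₁ + ((f c₂ : ℝ) : ℂ) • P₂ := by
        rw [hc, hc, hcoeff0, sub_zero, sub_zero, heval c₁ hc₁S, heval c₂ hc₂S]

lemma mpow_two_proj (P₁ P₂ : Matrix n n ℂ) (h₁ : P₁.IsHermitian) (h₂ : P₂.IsHermitian)
    (hP₁ : P₁ * P₁ = P₁) (hP₂ : P₂ * P₂ = P₂) (h₁₂ : P₁ * P₂ = 0) (h₂₁ : P₂ * P₁ = 0)
    (c₁ c₂ : ℝ) (t : ℝ) (ht : t ≠ 0) :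
    mpow (((c₁ : ℝ) : ℂ) • P₁ + ((c₂ : ℝ) : ℂ) • P₂) t =
      ((c₁ ^ t : ℝ) : ℂ) • P₁ + ((c₂ ^ t : ℝ) : ℂ) • P₂ := by
  rw [mpow, matFun_two_proj P₁ P₂ h₁ h₂ hP₁ hP₂ h₁₂ h₂₁ c₁ c₂ _ (by simp)]
  congr 2
  · by_cases h : c₁ = 0
    · simp [h, Real.zero_rpow ht]
    · simp [h]
  · by_cases h : c₂ = 0
    · simp [h, Real.zero_rpow ht]
    · simp [h]

lemma ptrA_smul_add {A B : Type*} [Fintype A] (x y : ℂ)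
    (M N : Matrix (A × B) (A × B) ℂ) :
    ptrA (x • M + y • N) = x • ptrA M + y • ptrA N := by
  ext b b'
  simp [ptrA, Finset.sum_add_distrib, Finset.mul_sum]

end AuxLemmas

section Concrete

open Polynomial

variable (d : ℕ)

/-- the maximally entangled vector -/
noncomputable def phiV (d : ℕ) : Fin d × Fin (d + 1) → ℂ := fun x =>
  if x.2 = Fin.castSucc x.1 then (((Real.sqrt d)⁻¹ : ℝ) : ℂ) else 0

noncomputable def projME (d : ℕ) : Matrix (Fin d × Fin (d + 1)) (Fin d × Fin (d + 1)) ℂ :=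
  Matrix.vecMulVec (phiV d) (star (phiV d))

noncomputable def projER (d : ℕ) : Matrix (Fin d × Fin (d + 1)) (Fin d × Fin (d + 1)) ℂ :=
  (1 : Matrix (Fin d) (Fin d) ℂ) ⊗ₖ
    Matrix.single (Fin.last d) (Fin.last d) (1 : ℂ)

noncomputable def diagNL (d : ℕ) : Matrix (Fin (d + 1)) (Fin (d + 1)) ℂ :=
  Matrix.diagonal (fun b => if b = Fin.last d then 0 else 1)

noncomputable def projL (d : ℕ) : Matrix (Fin (d + 1)) (Fin (d + 1)) ℂ :=
  Matrix.single (Fin.last d) (Fin.last d) (1 : ℂ)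

lemma phiV_last (a : Fin d) : phiV d (a, Fin.last d) = 0 := by
  have : Fin.last d ≠ Fin.castSucc a := (Fin.castSucc_lt_last a).ne'
  simp [phiV, this]

lemma phiV_mul_self (hd : 1 ≤ d) (a : Fin d) (b : Fin (d + 1)) :
    phiV d (a, b) * starRingEnd ℂ (phiV d (a, b)) =
      if b = Fin.castSucc a then (((d : ℝ)⁻¹ : ℝ) : ℂ) else 0 := by
  have hd0 : (0 : ℝ) < d := by exact_mod_cast hd
  by_cases h : b = Fin.castSucc a
  · simp only [phiV, h, if_pos rfl, if_true]
    rw [Complex.conj_ofReal, ← Complex.ofReal_mul, ← mul_inv,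
      Real.mul_self_sqrt hd0.le]
  · simp [phiV, h]

lemma phiV_norm (hd : 1 ≤ d) :
    ∑ y : Fin d × Fin (d + 1), starRingEnd ℂ (phiV d y) * phiV d y = 1 := by
  have hd0 : (0 : ℝ) < d := by exact_mod_cast hd
  rw [Fintype.sum_prod_type]
  have : ∀ a : Fin d, ∑ b : Fin (d + 1),
      starRingEnd ℂ (phiV d (a, b)) * phiV d (a, b) = (((d : ℝ)⁻¹ : ℝ) : ℂ) := by
    intro a
    have h1 : ∀ b, starRingEnd ℂ (phiV d (a, b)) * phiV d (a, b) =
        if b = Fin.castSucc a then (((d : ℝ)⁻¹ : ℝ) : ℂ) else 0 := by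
      intro b; rw [mul_comm]; exact phiV_mul_self d hd a b
    simp only [h1]
    rw [Finset.sum_ite_eq' Finset.univ (Fin.castSucc a)]
    simp
  simp only [this, Finset.sum_const, Finset.card_univ, Fintype.card_fin, nsmul_eq_mul]
  rw [← Complex.ofReal_natCast, ← Complex.ofReal_mul, mul_inv_cancel₀ hd0.ne']
  simp

lemma projME_herm : (projME d).IsHermitian := by
  unfold projME
  ext x y
  simp [Matrix.conjTranspose_apply, Matrix.vecMulVec_apply, mul_comm]

lemma projME_idem (hd : 1 ≤ d) : projME d * projME d = projME d := by
  unfold projME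
  ext x z
  simp only [Matrix.mul_apply, Matrix.vecMulVec_apply, Pi.star_apply, RCLike.star_def]
  calc ∑ y, phiV d x * starRingEnd ℂ (phiV d y) * (phiV d y * starRingEnd ℂ (phiV d z))
      = (phiV d x * starRingEnd ℂ (phiV d z)) *
        ∑ y, starRingEnd ℂ (phiV d y) * phiV d y := by
        rw [Finset.mul_sum]; congr 1; funext y; ring
    _ = phiV d x * starRingEnd ℂ (phiV d z) := by rw [phiV_norm d hd, mul_one]

lemma projER_herm : (projER d).IsHermitian := by
  unfold projER
  ext x y
  simp only [Matrix.conjTranspose_apply, Matrix.kroneckerMap_apply, Matrix.one_apply,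
    Matrix.single]
  by_cases h1 : x.1 = y.1 <;> by_cases h2 : y.1 = x.1 <;>
    first
    | (exfalso; omega)
    | simp_all [Matrix.of_apply, and_comm, eq_comm, apply_ite (starRingEnd ℂ)]

lemma projER_idem : projER d * projER d = projER d := by
  unfold projER
  rw [← Matrix.mul_kronecker_mul, Matrix.one_mul,
    Matrix.single_mul_single_same, mul_one]

lemma projME_mul_projER : projME d * projER d = 0 := by
  unfold projME projER
  ext x z
  simp only [Matrix.mul_apply, Matrix.vecMulVec_apply, Pi.star_apply, RCLike.star_def,
    Matrix.kroneckerMap_apply, Matrix.one_apply, Matrix.single, Matrix.of_apply,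
    Matrix.zero_apply]
  rw [Fintype.sum_prod_type]
  apply Finset.sum_eq_zero
  intro a _
  apply Finset.sum_eq_zero
  intro b _
  by_cases hb : b = Fin.last d
  · subst hb
    rw [phiV_last]
    simp
  · have : ¬ (Fin.last d = b ∧ z.2 = Fin.last d) := fun h => hb h.1.symm
    simp only [if_neg]
    rcases eq_or_ne a z.1 with h | h
    · simp [hb, Ne.symm hb]
    · simp [hb, Ne.symm hb]

lemma projER_mul_projME : projER d * projME d = 0 := by
  have h := congrArg Matrix.conjTranspose (projME_mul_projER d)
  rw [Matrix.conjTranspose_mul, (projME_herm d).eq, (projER_herm d).eq] at h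
  simpa using h

lemma ptrA_projME (hd : 1 ≤ d) :
    ptrA (projME d) = (((d : ℝ)⁻¹ : ℝ) : ℂ) • diagNL d := by
  have hd0 : (0 : ℝ) < d := by exact_mod_cast hd
  ext b b'
  simp only [ptrA, projME, Matrix.of_apply, Matrix.vecMulVec_apply, Pi.star_apply,
    RCLike.star_def, diagNL, Matrix.smul_apply, Matrix.diagonal_apply, smul_eq_mul]
  unfold phiV
  simp only [mul_ite, ite_mul, zero_mul, mul_zero]
  rcases eq_or_ne b b' with rfl | hne
  · by_cases hb : b = Fin.last d
    · subst hb
      rw [Finset.sum_eq_zero]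
      · simp
      · intro a _
        have : Fin.last d ≠ Fin.castSucc a := (Fin.castSucc_lt_last a).ne'
        simp [this]
    · obtain ⟨a₀, ha₀⟩ : ∃ a₀ : Fin d, b = Fin.castSucc a₀ := by
        obtain ⟨a₀, ha⟩ := Fin.exists_castSucc_eq.2 hb
        exact ⟨a₀, ha.symm⟩
      subst ha₀
      rw [Finset.sum_eq_single a₀]
      · have : Fin.castSucc a₀ ≠ Fin.last d := (Fin.castSucc_lt_last a₀).ne
        simp only [if_pos rfl, if_neg this, if_pos rfl, if_true]
        rw [Complex.conj_ofReal, ← Complex.ofReal_mul, ← mul_inv,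
          Real.mul_self_sqrt hd0.le]
        simp
      · intro a _ ha
        have : Fin.castSucc a₀ ≠ Fin.castSucc a := by
          simpa [Fin.castSucc_inj] using (Ne.symm ha)
        simp [this]
      · intro h; exact absurd (Finset.mem_univ a₀) h
  · rw [Finset.sum_eq_zero]
    · simp [hne]
    · intro a _
      by_cases h1 : b = Fin.castSucc a
      · by_cases h2 : b' = Fin.castSucc a
        · exact absurd (h1.trans h2.symm) hne
        · simp [h1, h2]
      · simp [h1]

lemma ptrA_projER :
    ptrA (projER d) = ((d : ℝ) : ℂ) • projL d := by
  ext b b'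
  simp only [ptrA, projER, projL, Matrix.of_apply, Matrix.kroneckerMap_apply,
    Matrix.one_apply_eq, one_mul, Matrix.smul_apply, smul_eq_mul]
  simp [Matrix.single, Finset.sum_ite_eq, mul_comm]

lemma diagNL_herm : (diagNL d).IsHermitian := by
  unfold diagNL
  ext b b'
  rcases eq_or_ne b b' with rfl | h
  · simp [Matrix.conjTranspose_apply, Matrix.diagonal_apply_eq, apply_ite (starRingEnd ℂ)]
  · simp [Matrix.conjTranspose_apply, Matrix.diagonal_apply_ne _ h,
      Matrix.diagonal_apply_ne _ (Ne.symm h)]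

lemma diagNL_idem : diagNL d * diagNL d = diagNL d := by
  unfold diagNL
  rw [Matrix.diagonal_mul_diagonal]
  ext b b'
  rcases eq_or_ne b b' with rfl | h
  · by_cases hb : b = Fin.last d <;> simp [hb]
  · simp [Matrix.diagonal_apply_ne _ h]

lemma projL_herm : (projL d).IsHermitian := by
  unfold projL
  ext b b'
  simp [Matrix.conjTranspose_apply, Matrix.single, Matrix.of_apply,
    and_comm, apply_ite (starRingEnd ℂ)]

lemma projL_idem : projL d * projL d = projL d := by
  unfold projL
  rw [Matrix.single_mul_single_same, mul_one]

lemma diagNL_mul_projL : diagNL d * projL d = 0 := by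
  unfold diagNL projL
  ext b b'
  rw [Matrix.diagonal_mul]
  simp only [Matrix.single, Matrix.of_apply, Matrix.zero_apply]
  by_cases h : b = Fin.last d
  · simp [h]
  · simp [h, eq_comm]

lemma projL_mul_diagNL : projL d * diagNL d = 0 := by
  unfold diagNL projL
  ext b b'
  rw [Matrix.mul_diagonal]
  simp only [Matrix.single, Matrix.of_apply, Matrix.zero_apply]
  by_cases h : b' = Fin.last d
  · simp [h]
  · simp [h, eq_comm]

lemma trace_diagNL : Matrix.trace (diagNL d) = (d : ℂ) := by
  unfold diagNL
  rw [Matrix.trace_diagonal]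
  have h1 : (∑ i : Fin (d+1), if i = Fin.last d then (0:ℂ) else 1) =
      ∑ i : Fin (d+1), ((1:ℂ) - if i = Fin.last d then (1:ℂ) else 0) := by
    apply Finset.sum_congr rfl
    intro i _
    by_cases h : i = Fin.last d <;> simp [h]
  rw [h1, Finset.sum_sub_distrib,
    Finset.sum_ite_eq' Finset.univ (Fin.last d) (fun _ => (1:ℂ))]
  simp

lemma trace_projL : Matrix.trace (projL d) = 1 := by
  unfold projL
  simp [Matrix.trace, Matrix.diag, Matrix.single, Finset.sum_ite_eq]

end Concrete

/-- Single-use Sibson value for the quantum erasure channel with maximally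
entangled input: `Tr[(Tr_A ρ^λ)^{1/λ}] = (1−p)·d^{(λ−1)/λ} + p·d^{(1−λ)/λ}`,
equivalently `−ln Tr[(Tr_A ρ^{1/(s+1)})^{s+1}] = −ln((1−p)d^{−s} + p d^{s})`
with `s = 1/λ − 1`. -/
theorem erasure_single_use_sibson (d : ℕ) (hd : 1 ≤ d)
    (p lam : ℝ) (hp₀ : 0 ≤ p) (hp₁ : p ≤ 1) (hlam : 1 < lam)
    (φ : Fin d × Fin (d + 1) → ℂ)
    (hφ : φ = fun x : Fin d × Fin (d + 1) =>
      if x.2 = Fin.castSucc x.1 then (((Real.sqrt d)⁻¹ : ℝ) : ℂ) else 0)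
    (ρ : Matrix (Fin d × Fin (d + 1)) (Fin d × Fin (d + 1)) ℂ)
    (hρ : ρ = ((1 - p : ℝ) : ℂ) • Matrix.vecMulVec φ (star φ) +
      ((p / d : ℝ) : ℂ) •
        ((1 : Matrix (Fin d) (Fin d) ℂ) ⊗ₖ
          Matrix.single (Fin.last d) (Fin.last d) (1 : ℂ))) :
    trR (mpow (ptrA (mpow ρ lam)) (1 / lam)) =
        (1 - p) * (d : ℝ) ^ ((lam - 1) / lam) + p * (d : ℝ) ^ ((1 - lam) / lam) ∧
      -Real.log (trR (mpow (ptrA (mpow ρ (1 / (1 / lam - 1 + 1)))) (1 / lam - 1 + 1))) =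
        -Real.log ((1 - p) * (d : ℝ) ^ (-(1 / lam - 1)) + p * (d : ℝ) ^ (1 / lam - 1)) := by
  have hd0 : (0:ℝ) < d := by exact_mod_cast hd
  have hlam0 : (0:ℝ) < lam := lt_trans one_pos hlam
  have hlamne : lam ≠ 0 := hlam0.ne'
  have hinvne : 1/lam ≠ 0 := one_div_ne_zero hlamne
  have h1p : (0:ℝ) ≤ 1 - p := sub_nonneg.2 hp₁
  have hpd : (0:ℝ) ≤ p / d := div_nonneg hp₀ hd0.le
  have hρ' : ρ = ((1 - p : ℝ) : ℂ) • projME d + ((p / d : ℝ) : ℂ) • projER d := by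
    rw [hρ, hφ]
    rfl
  have step1 : mpow ρ lam =
      ((((1-p) ^ lam : ℝ)) : ℂ) • projME d + ((((p/d) ^ lam : ℝ)) : ℂ) • projER d := by
    rw [hρ']
    exact mpow_two_proj _ _ (projME_herm d) (projER_herm d) (projME_idem d hd)
      (projER_idem d) (projME_mul_projER d) (projER_mul_projME d) _ _ lam hlamne
  have step2 : ptrA (mpow ρ lam) =
      ((((1-p) ^ lam * ((d:ℝ))⁻¹ : ℝ)) : ℂ) • diagNL d +
        ((((p/d) ^ lam * (d:ℝ) : ℝ)) : ℂ) • projL d := by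
    rw [step1, ptrA_smul_add, ptrA_projME d hd, ptrA_projER d, smul_smul, smul_smul,
      ← Complex.ofReal_mul, ← Complex.ofReal_mul]
  have step3 : mpow (ptrA (mpow ρ lam)) (1/lam) =
      (((((1-p) ^ lam * ((d:ℝ))⁻¹) ^ (1/lam) : ℝ)) : ℂ) • diagNL d +
        (((((p/d) ^ lam * (d:ℝ)) ^ (1/lam) : ℝ)) : ℂ) • projL d := by
    rw [step2]
    exact mpow_two_proj _ _ (diagNL_herm d) (projL_herm d) (diagNL_idem d)
      (projL_idem d) (diagNL_mul_projL d) (projL_mul_diagNL d) _ _ (1/lam) hinvne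
  have step4 : trR (mpow (ptrA (mpow ρ lam)) (1/lam)) =
      ((1-p) ^ lam * ((d:ℝ))⁻¹) ^ (1/lam) * d + ((p/d) ^ lam * (d:ℝ)) ^ (1/lam) := by
    rw [trR, step3, Matrix.trace_add, Matrix.trace_smul, Matrix.trace_smul,
      trace_diagNL, trace_projL]
    rw [smul_eq_mul, smul_eq_mul, mul_one, show ((d:ℂ)) = (((d:ℝ)):ℂ) by push_cast; rfl,
      ← Complex.ofReal_mul, ← Complex.ofReal_add, Complex.ofReal_re]
  have e1 : ((1-p) ^ lam * ((d:ℝ))⁻¹) ^ (1/lam) = (1-p) * (d:ℝ) ^ (-(1/lam)) := by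
    rw [Real.mul_rpow (Real.rpow_nonneg h1p _) (inv_nonneg.2 hd0.le),
      ← Real.rpow_mul h1p, mul_one_div_cancel hlamne, Real.rpow_one,
      Real.inv_rpow hd0.le, ← Real.rpow_neg hd0.le]
  have e1' : ((1-p) ^ lam * ((d:ℝ))⁻¹) ^ (1/lam) * d = (1-p) * (d:ℝ) ^ ((lam-1)/lam) := by
    rw [e1, mul_assoc]
    congr 1
    have hexp : -(1/lam) + 1 = (lam-1)/lam := by field_simp; ring
    have h2 : (d:ℝ) ^ (-(1/lam)) * (d:ℝ) ^ (1:ℝ) = (d:ℝ) ^ ((lam-1)/lam) := by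
      rw [← Real.rpow_add hd0, hexp]
    rw [Real.rpow_one] at h2
    exact h2
  have e2 : ((p/d) ^ lam * (d:ℝ)) ^ (1/lam) = p * (d:ℝ) ^ ((1-lam)/lam) := by
    rw [Real.mul_rpow (Real.rpow_nonneg hpd _) hd0.le, ← Real.rpow_mul hpd,
      mul_one_div_cancel hlamne, Real.rpow_one]
    rw [div_mul_eq_mul_div, mul_div_assoc]
    congr 1
    have hexp : (1-lam)/lam + 1 = 1/lam := by field_simp; ring
    have h2 : (d:ℝ) ^ ((1-lam)/lam) * (d:ℝ) ^ (1:ℝ) = (d:ℝ) ^ (1/lam) := by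
      rw [← Real.rpow_add hd0, hexp]
    rw [Real.rpow_one] at h2
    rw [div_eq_iff hd0.ne']
    exact h2.symm
  have key : trR (mpow (ptrA (mpow ρ lam)) (1/lam)) =
      (1 - p) * (d : ℝ) ^ ((lam - 1) / lam) + p * (d : ℝ) ^ ((1 - lam) / lam) := by
    rw [step4, e1', e2]
  refine ⟨key, ?_⟩
  have h1 : 1/lam - 1 + 1 = 1/lam := by ring
  have h2 : 1/(1/lam) = lam := one_div_one_div lam
  have h3 : -(1/lam - 1) = (lam-1)/lam := by field_simp; ring
  have h4 : 1/lam - 1 = (1-lam)/lam := by field_simp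
  rw [h1, h2, key, h3, h4]
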